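/- Let M be a loopless matroid on a finite nonempty ground set E (with |E| = n) with set of bases ℬ, all of cardinality r = rk(E) ≥ 1, and basis generating polynomial ψ_M(x) = Σ_{B∈ℬ} ∏_{e∈B} x_e. Then for s = n / r and every ε with 0 < ε < 1, the function z ↦ 1 / ( ψ_M( (-ln|z_e|)_{e∈E} )^s · ∏_{e∈E} |z_e|^2 ) is NOT integrable (with respect to Lebesgue measure on ℂ^E) on the ball { z ∈ ℂ^E : ‖z‖ < ε }. -/

import Mathlib

open MeasureTheory Metric Finset

namespace Stmt12Aux

noncomputable section

def Ann (j : ℕ) : Set ℂ :=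
  Metric.ball 0 (Real.exp (-(j:ℝ))) \ Metric.ball 0 (Real.exp (-((j:ℝ)+1)))

lemma mem_Ann {j : ℕ} {w : ℂ} :
    w ∈ Ann j ↔ ‖w‖ < Real.exp (-(j:ℝ)) ∧ Real.exp (-((j:ℝ)+1)) ≤ ‖w‖ := by
  simp [Ann, Metric.mem_ball, dist_zero_right, not_lt, Set.mem_diff, and_comm]

lemma measurableSet_Ann (j : ℕ) : MeasurableSet (Ann j) :=
  measurableSet_ball.diff measurableSet_ball

lemma Ann_disjoint_lt {j j' : ℕ} (hlt : j < j') : Disjoint (Ann j) (Ann j') := by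
  rw [Set.disjoint_left]
  intro w hw hw'
  rw [mem_Ann] at hw hw'
  have h1 : ((j:ℝ)+1) ≤ (j':ℝ) := by exact_mod_cast hlt
  have h2 : Real.exp (-(j':ℝ)) ≤ Real.exp (-((j:ℝ)+1)) := Real.exp_le_exp.2 (by linarith)
  exact absurd (hw'.1.trans_le h2) (not_lt.2 hw.2)

lemma Ann_disjoint {j j' : ℕ} (h : j ≠ j') : Disjoint (Ann j) (Ann j') := by
  rcases h.lt_or_gt with h | h
  exacts [Ann_disjoint_lt h, (Ann_disjoint_lt h).symm]

lemma vol_ball (R : ℝ) (hR : 0 ≤ R) :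
    volume (Metric.ball (0:ℂ) R) = ENNReal.ofReal (Real.pi * R^2) := by
  rw [Complex.volume_ball, ← ENNReal.ofReal_pow hR,
    show ((NNReal.pi : ENNReal)) = ENNReal.ofReal Real.pi by
      rw [← NNReal.coe_real_pi, ENNReal.ofReal_coe_nnreal],
    ← ENNReal.ofReal_mul (by positivity), mul_comm]

lemma volume_Ann (j : ℕ) :
    volume (Ann j) = ENNReal.ofReal ((Real.pi * (1 - Real.exp (-2))) * Real.exp (-(2*(j:ℝ)))) := by
  have hsub : Metric.ball (0:ℂ) (Real.exp (-((j:ℝ)+1))) ⊆ Metric.ball 0 (Real.exp (-(j:ℝ))) :=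
    Metric.ball_subset_ball (Real.exp_le_exp.2 (by linarith))
  rw [Ann, measure_diff hsub measurableSet_ball.nullMeasurableSet
      (by rw [vol_ball _ (Real.exp_nonneg _)]; exact ENNReal.ofReal_ne_top),
    vol_ball _ (Real.exp_nonneg _), vol_ball _ (Real.exp_nonneg _),
    ← ENNReal.ofReal_sub _ (by positivity)]
  congr 1
  have e1 : Real.exp (-(j:ℝ))^2 = Real.exp (-(2*(j:ℝ))) := by
    rw [← Real.exp_nat_mul]; congr 1; push_cast; ring
  have e2 : Real.exp (-((j:ℝ)+1))^2 = Real.exp (-(2*(j:ℝ))) * Real.exp (-2) := by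
    rw [← Real.exp_nat_mul, ← Real.exp_add]; congr 1; push_cast; ring
  rw [e1, e2]; ring

variable {α : Type*} [Fintype α]

def Box (m : α → ℕ) : Set (α → ℂ) := Set.univ.pi fun e => Ann (m e)

lemma measurableSet_Box (m : α → ℕ) : MeasurableSet (Box m) :=
  MeasurableSet.univ_pi fun _ => measurableSet_Ann _

lemma mem_Box {m : α → ℕ} {z : α → ℂ} : z ∈ Box m ↔ ∀ e, z e ∈ Ann (m e) := by
  simp [Box, Set.mem_pi]

lemma Box_disjoint {m m' : α → ℕ} (h : m ≠ m') : Disjoint (Box m) (Box m') := by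
  obtain ⟨e, he⟩ := Function.ne_iff.1 h
  rw [Set.disjoint_left]
  intro z hz hz'
  exact Set.disjoint_left.1 (Ann_disjoint he) (mem_Box.1 hz e) (mem_Box.1 hz' e)

lemma volume_Box (m : α → ℕ) :
    volume (Box m) = ENNReal.ofReal ((Real.pi * (1 - Real.exp (-2)))^(Fintype.card α)
      * Real.exp (-(2 * (∑ e, (m e : ℝ))))) := by
  rw [Box, volume_pi_pi]
  simp_rw [volume_Ann]
  have hfac : (0:ℝ) ≤ Real.pi * (1 - Real.exp (-2)) :=
    mul_nonneg Real.pi_pos.le (by nlinarith [Real.exp_lt_one_iff.2 (by norm_num : (-2:ℝ) < 0)])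
  rw [← ENNReal.ofReal_prod_of_nonneg (fun e _ => mul_nonneg hfac (Real.exp_nonneg _))]
  congr 1
  rw [Finset.prod_mul_distrib, Finset.prod_const, ← Real.exp_sum, Finset.card_univ]
  congr 1
  rw [Finset.mul_sum]
  simp

lemma Box_subset_ball [Nonempty α] {m : α → ℕ} {K : ℕ} (hm : ∀ e, K ≤ m e) {ε : ℝ}
    (hε0 : 0 < ε) (hK : Real.exp (-(K:ℝ)) < ε) : Box m ⊆ Metric.ball 0 ε := by
  intro z hz
  rw [mem_ball_zero_iff, pi_norm_lt_iff hε0]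
  intro e
  have h1 := (mem_Ann.1 (mem_Box.1 hz e)).1
  have h2 : Real.exp (-((m e : ℕ):ℝ)) ≤ Real.exp (-(K:ℝ)) :=
    Real.exp_le_exp.2 (neg_le_neg (by exact_mod_cast hm e))
  linarith

lemma key_lower [Nonempty α] (ℬ : Finset (Finset α)) (hne : ℬ.Nonempty)
    (r : ℕ) (hr : 1 ≤ r) (hcard : ∀ B ∈ ℬ, B.card = r)
    (s : ℝ) (hs : s = (Fintype.card α : ℝ) / (r : ℝ))
    (m : α → ℕ) (z : α → ℂ) (hz : z ∈ Box m) :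
    ((ℬ.card : ℝ) ^ s * (∑ e, ((m e : ℝ) + 1)) ^ (Fintype.card α)
        * Real.exp (-(2 * ∑ e, (m e : ℝ))))⁻¹ ≤
      1 / ((∑ B ∈ ℬ, ∏ e ∈ B, (-Real.log (‖z e‖))) ^ s *
          ∏ e : α, ‖z e‖ ^ 2) := by
  have hz' : ∀ e, ‖z e‖ < Real.exp (-((m e : ℕ):ℝ)) ∧
      Real.exp (-(((m e : ℕ):ℝ))-1) ≤ ‖z e‖ := by
    intro e
    have h := mem_Ann.1 (mem_Box.1 hz e)
    exact ⟨h.1, by rw [sub_eq_add_neg, ← neg_add]; exact h.2⟩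
  set u : α → ℝ := fun e => -Real.log (‖z e‖) with hu
  set T : ℝ := ∑ e, ((m e : ℝ) + 1) with hT
  have habs_pos : ∀ e, 0 < ‖z e‖ :=
    fun e => lt_of_lt_of_le (Real.exp_pos _) (hz' e).2
  have hu_lb : ∀ e, (m e : ℝ) < u e := by
    intro e
    have := Real.log_lt_log (habs_pos e) (hz' e).1
    rw [Real.log_exp] at this
    simp only [hu]
    linarith
  have hu_ub : ∀ e, u e ≤ (m e : ℝ) + 1 := by
    intro e
    have := Real.log_le_log (Real.exp_pos _) (hz' e).2
    rw [Real.log_exp] at this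
    simp only [hu]
    linarith
  have hu_pos : ∀ e, 0 < u e := fun e => lt_of_le_of_lt (Nat.cast_nonneg _) (hu_lb e)
  have hTe : ∀ e, u e ≤ T := by
    intro e
    refine (hu_ub e).trans ?_
    exact Finset.single_le_sum (f := fun e => ((m e : ℝ) + 1))
      (fun e _ => by positivity) (Finset.mem_univ e)
  have hT0 : 0 < T :=
    Finset.sum_pos (fun e _ => by positivity) Finset.univ_nonempty
  set ψ : ℝ := ∑ B ∈ ℬ, ∏ e ∈ B, u e with hψ
  obtain ⟨B₀, hB₀⟩ := hne
  have hψpos : 0 < ψ := by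
    have h1 : 0 < ∏ e ∈ B₀, u e := Finset.prod_pos fun e _ => hu_pos e
    have h2 : ∏ e ∈ B₀, u e ≤ ψ :=
      Finset.single_le_sum (f := fun B => ∏ e ∈ B, u e)
        (fun B _ => Finset.prod_nonneg fun e _ => (hu_pos e).le) hB₀
    linarith
  have hψle : ψ ≤ (ℬ.card : ℝ) * T ^ r := by
    calc ψ ≤ ∑ _B ∈ ℬ, T ^ r := by
          refine Finset.sum_le_sum fun B hB => ?_
          calc ∏ e ∈ B, u e ≤ ∏ _e ∈ B, T :=
                Finset.prod_le_prod (fun e _ => (hu_pos e).le) (fun e _ => hTe e)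
            _ = T ^ B.card := Finset.prod_const T
            _ = T ^ r := by rw [hcard B hB]
      _ = (ℬ.card : ℝ) * T ^ r := by rw [Finset.sum_const, nsmul_eq_mul]
  have hs0 : 0 ≤ s := by rw [hs]; positivity
  have hrpos : (0:ℝ) < r := by exact_mod_cast hr
  have hrs : (r : ℝ) * s = (Fintype.card α : ℝ) := by
    rw [hs]; field_simp
  have hψs : ψ ^ s ≤ (ℬ.card : ℝ) ^ s * T ^ (Fintype.card α) := by
    calc ψ ^ s ≤ ((ℬ.card : ℝ) * T ^ r) ^ s := Real.rpow_le_rpow hψpos.le hψle hs0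
      _ = (ℬ.card : ℝ) ^ s * (T ^ r) ^ s := Real.mul_rpow (by positivity) (by positivity)
      _ = (ℬ.card : ℝ) ^ s * T ^ (Fintype.card α) := by
          congr 1
          rw [← Real.rpow_natCast T r, ← Real.rpow_mul hT0.le, hrs, Real.rpow_natCast]
  have hP : ∏ e, ‖z e‖ ^ 2 ≤ Real.exp (-(2 * ∑ e, (m e : ℝ))) := by
    calc ∏ e, ‖z e‖ ^ 2 ≤ ∏ e, Real.exp ((-2) * (m e : ℝ)) := by
          refine Finset.prod_le_prod (fun e _ => by positivity) (fun e _ => ?_)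
          have h2 : Real.exp ((-2) * (m e : ℝ)) = (Real.exp (-((m e : ℕ):ℝ)))^2 := by
            rw [← Real.exp_nat_mul]; congr 1; push_cast; ring
          rw [h2]
          exact pow_le_pow_left₀ (habs_pos e).le (hz' e).1.le 2
      _ = Real.exp (∑ e, (-2) * (m e : ℝ)) := (Real.exp_sum _ _).symm
      _ = Real.exp (-(2 * ∑ e, (m e : ℝ))) := by rw [← Finset.mul_sum]; ring_nf
  have hPpos : 0 < ∏ e, ‖z e‖ ^ 2 :=
    Finset.prod_pos fun e _ => pow_pos (habs_pos e) 2
  have hden_pos : 0 < ψ ^ s * ∏ e, ‖z e‖ ^ 2 :=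
    mul_pos (Real.rpow_pos_of_pos hψpos s) hPpos
  have hden_le : ψ ^ s * ∏ e, ‖z e‖ ^ 2 ≤
      (ℬ.card : ℝ) ^ s * T ^ (Fintype.card α) * Real.exp (-(2 * ∑ e, (m e : ℝ))) :=
    mul_le_mul hψs hP hPpos.le (by positivity)
  rw [one_div]
  exact inv_anti₀ hden_pos hden_le

end

end Stmt12Aux

open MeasureTheory

open Metric Finset Stmt12Aux in
theorem stmt_12 {α : Type*} [Fintype α] [DecidableEq α] [Nonempty α]
    (ℬ : Finset (Finset α)) (hne : ℬ.Nonempty)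
    (r : ℕ) (hr : 1 ≤ r)
    (hcard : ∀ B ∈ ℬ, B.card = r)
    (hexch : ∀ B₁ ∈ ℬ, ∀ B₂ ∈ ℬ, ∀ e ∈ B₁ \ B₂,
      ∃ f ∈ B₂ \ B₁, insert f (B₁.erase e) ∈ ℬ)
    (hloopless : ∀ e : α, ∃ B ∈ ℬ, e ∈ B)
    (s : ℝ) (hs : s = (Fintype.card α : ℝ) / (r : ℝ))
    (ε : ℝ) (hε0 : 0 < ε) (hε1 : ε < 1) :
    ¬ IntegrableOn
      (fun z : α → ℂ =>
        1 / ((∑ B ∈ ℬ, ∏ e ∈ B, (-Real.log (‖z e‖))) ^ s *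
          ∏ e : α, ‖z e‖ ^ 2))
      (Metric.ball 0 ε) := by
  classical
  intro hInt
  set f : (α → ℂ) → ℝ := fun z =>
      1 / ((∑ B ∈ ℬ, ∏ e ∈ B, (-Real.log (‖z e‖))) ^ s *
        ∏ e : α, ‖z e‖ ^ 2) with hf
  set n := Fintype.card α with hn
  have hn1 : 1 ≤ n := Fintype.card_pos
  set c : ℝ := Real.pi * (1 - Real.exp (-2)) with hc
  have hc0 : 0 < c :=
    mul_pos Real.pi_pos (by nlinarith [Real.exp_lt_one_iff.2 (by norm_num : (-2:ℝ) < 0)])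
  have hcardB : (0:ℝ) < (ℬ.card : ℝ) := by
    exact_mod_cast Finset.card_pos.2 hne
  set D : ℝ := c ^ n / (ℬ.card : ℝ) ^ s with hD
  have hD0 : 0 < D := div_pos (pow_pos hc0 n) (Real.rpow_pos_of_pos hcardB s)
  -- choice of K
  obtain ⟨K, hK⟩ := exists_nat_gt (-Real.log ε)
  have hKε : Real.exp (-(K:ℝ)) < ε := by
    have h1 : -(K:ℝ) < Real.log ε := by linarith
    calc Real.exp (-(K:ℝ)) < Real.exp (Real.log ε) := Real.exp_lt_exp.2 h1
      _ = ε := Real.exp_log hε0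
  -- per-box lower bound
  have hbox : ∀ m : α → ℕ,
      ENNReal.ofReal (D / (∑ e, ((m e : ℝ) + 1)) ^ n) ≤
        ∫⁻ z in Box m, (‖f z‖₊ : ENNReal) := by
    intro m
    set T : ℝ := ∑ e, ((m e : ℝ) + 1) with hT
    have hT0 : 0 < T := Finset.sum_pos (fun e _ => by positivity) Finset.univ_nonempty
    set g : ℝ := ((ℬ.card : ℝ) ^ s * T ^ n * Real.exp (-(2 * ∑ e, (m e : ℝ))))⁻¹ with hg
    have step1 : ∀ z ∈ Box m, ENNReal.ofReal g ≤ (‖f z‖₊ : ENNReal) := by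
      intro z hz
      refine le_trans (ENNReal.ofReal_le_ofReal ?_) (Real.ofReal_le_enorm _)
      exact key_lower ℬ hne r hr hcard s hs m z hz
    calc ENNReal.ofReal (D / T ^ n)
        = ENNReal.ofReal g * volume (Box m) := by
          rw [volume_Box, ← ENNReal.ofReal_mul (p := g) (by positivity)]
          congr 1
          rw [hg, hD, ← hn, ← hc]
          have he : Real.exp (-(2 * ∑ e, (m e : ℝ))) ≠ 0 := Real.exp_ne_zero _
          have h1 : ((ℬ.card : ℝ) ^ s) ≠ 0 := (Real.rpow_pos_of_pos hcardB s).ne'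
          have h2 : T ^ n ≠ 0 := (pow_pos hT0 n).ne'
          field_simp
      _ = ∫⁻ _z in Box m, ENNReal.ofReal g := (setLIntegral_const _ _).symm
      _ ≤ ∫⁻ z in Box m, (‖f z‖₊ : ENNReal) :=
          lintegral_mono_ae ((ae_restrict_iff' (measurableSet_Box m)).2 (ae_of_all _ step1))
  -- blocks
  set Mfin : ℕ → Finset (α → ℕ) :=
    fun j => Fintype.piFinset fun _ => Finset.Ico (2^j) (2^(j+1)) with hMfin
  have hMmem : ∀ j (m : α → ℕ), m ∈ Mfin j ↔ ∀ e, 2^j ≤ m e ∧ m e < 2^(j+1) := by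
    intro j m
    simp [hMfin, Fintype.mem_piFinset, Finset.mem_Ico]
  have hMcard : ∀ j, (Mfin j).card = 2^(j*n) := by
    intro j
    rw [hMfin]
    rw [Fintype.card_piFinset]
    simp only [Nat.card_Ico]
    rw [Finset.prod_const, Finset.card_univ, ← hn]
    have h2 : 2^(j+1) - 2^j = 2^j := by rw [pow_succ]; omega
    rw [h2, ← pow_mul]
  set δ : ℝ := D / (2*(n:ℝ))^n with hδ
  have hδ0 : 0 < δ := div_pos hD0 (by positivity)
  have hblock : ∀ j,
      ENNReal.ofReal δ ≤ ∑ m ∈ Mfin j, ENNReal.ofReal (D / (∑ e, ((m e : ℝ) + 1)) ^ n) := by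
    intro j
    have hterm : ∀ m ∈ Mfin j,
        ENNReal.ofReal (δ / 2^(j*n)) ≤ ENNReal.ofReal (D / (∑ e, ((m e : ℝ) + 1)) ^ n) := by
      intro m hm
      apply ENNReal.ofReal_le_ofReal
      have hT0 : (0:ℝ) < ∑ e, ((m e : ℝ) + 1) :=
        Finset.sum_pos (fun e _ => by positivity) Finset.univ_nonempty
      have hTle : ∑ e, ((m e : ℝ) + 1) ≤ (n:ℝ) * 2^(j+1) := by
        calc ∑ e, ((m e : ℝ) + 1) ≤ ∑ _e : α, ((2:ℝ)^(j+1)) := by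
              refine Finset.sum_le_sum fun e _ => ?_
              have := ((hMmem j m).1 hm e).2
              have : (m e : ℝ) + 1 ≤ ((2^(j+1) : ℕ) : ℝ) := by exact_mod_cast this
              calc (m e : ℝ) + 1 ≤ ((2^(j+1) : ℕ) : ℝ) := this
                _ = (2:ℝ)^(j+1) := by push_cast; ring
          _ = (n:ℝ) * 2^(j+1) := by rw [Finset.sum_const, nsmul_eq_mul, Finset.card_univ, hn]
      have hkey : δ / 2^(j*n) = D / ((n:ℝ) * 2^(j+1))^n := by
        rw [hδ]
        rw [div_div]
        congr 1
        have h1 : ((n:ℝ) * 2^(j+1))^n = (2*(n:ℝ))^n * 2^(j*n) := by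
          have h2 : (n:ℝ) * 2^(j+1) = (2*(n:ℝ)) * 2^j := by rw [pow_succ]; ring
          rw [h2, mul_pow, ← pow_mul]
        rw [h1]
      rw [hkey]
      gcongr
    calc ENNReal.ofReal δ
        = (Mfin j).card * ENNReal.ofReal (δ / 2^(j*n)) := by
          rw [hMcard j, ← ENNReal.ofReal_natCast (2^(j*n)), ← ENNReal.ofReal_mul (by positivity)]
          congr 1
          push_cast
          rw [mul_div_cancel₀]
          positivity
      _ = ∑ _m ∈ Mfin j, ENNReal.ofReal (δ / 2^(j*n)) := by
          rw [Finset.sum_const, nsmul_eq_mul]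
      _ ≤ _ := Finset.sum_le_sum hterm
  -- block finsets are pairwise disjoint
  have hMdisj : ∀ {j j' : ℕ}, j ≠ j' → Disjoint (Mfin j) (Mfin j') := by
    have key : ∀ {j j' : ℕ}, j < j' → Disjoint (Mfin j) (Mfin j') := by
      intro j j' hlt
      rw [Finset.disjoint_left]
      intro m hm hm'
      obtain ⟨e⟩ := (inferInstance : Nonempty α)
      have h1 := ((hMmem j m).1 hm e).2
      have h2 := ((hMmem j' m).1 hm' e).1
      have h3 : (2:ℕ)^(j+1) ≤ 2^j' := Nat.pow_le_pow_right (by norm_num) hlt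
      omega
    intro j j' h
    rcases h.lt_or_gt with h | h
    exacts [key h, (key h).symm]
  -- main estimate
  have hmain : ∀ N : ℕ, ((N + 1 : ℕ) : ENNReal) * ENNReal.ofReal δ ≤
      ∫⁻ z in Metric.ball 0 ε, (‖f z‖₊ : ENNReal) := by
    intro N
    set F : Finset (α → ℕ) := (Finset.Icc K (K+N)).biUnion Mfin with hF
    have hFK : ∀ m ∈ F, ∀ e, K ≤ m e := by
      intro m hm e
      rw [hF, Finset.mem_biUnion] at hm
      obtain ⟨j, hj, hmj⟩ := hm
      have h1 := ((hMmem j m).1 hmj e).1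
      have h2 : K ≤ j := (Finset.mem_Icc.1 hj).1
      have h3 : j < 2^j := Nat.lt_two_pow_self
      omega
    have hsub : (⋃ m ∈ F, Box m) ⊆ Metric.ball (0 : α → ℂ) ε := by
      intro z hz
      rw [Set.mem_iUnion₂] at hz
      obtain ⟨m, hm, hzm⟩ := hz
      exact Box_subset_ball (hFK m hm) hε0 hKε hzm
    calc ((N + 1 : ℕ) : ENNReal) * ENNReal.ofReal δ
        = ∑ _j ∈ Finset.Icc K (K+N), ENNReal.ofReal δ := by
          rw [Finset.sum_const, nsmul_eq_mul, Nat.card_Icc]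
          congr 2
          omega
      _ ≤ ∑ j ∈ Finset.Icc K (K+N), ∑ m ∈ Mfin j,
            ENNReal.ofReal (D / (∑ e, ((m e : ℝ) + 1)) ^ n) :=
          Finset.sum_le_sum fun j _ => hblock j
      _ = ∑ m ∈ F, ENNReal.ofReal (D / (∑ e, ((m e : ℝ) + 1)) ^ n) := by
          rw [hF, Finset.sum_biUnion]
          intro j _ j' _ h
          exact hMdisj h
      _ ≤ ∑ m ∈ F, ∫⁻ z in Box m, (‖f z‖₊ : ENNReal) :=
          Finset.sum_le_sum fun m _ => hbox m
      _ = ∫⁻ z in ⋃ m ∈ F, Box m, (‖f z‖₊ : ENNReal) := by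
          rw [lintegral_biUnion_finset ?_ (fun m _ => measurableSet_Box m)]
          intro m _ m' _ h
          exact Box_disjoint h
      _ ≤ ∫⁻ z in Metric.ball 0 ε, (‖f z‖₊ : ENNReal) :=
          lintegral_mono' (Measure.restrict_mono hsub le_rfl) le_rfl
  -- contradiction with integrability
  set I : ENNReal := ∫⁻ z in Metric.ball 0 ε, (‖f z‖₊ : ENNReal) with hI
  have hIlt : I < ⊤ := hInt.2
  have hδne : ENNReal.ofReal δ ≠ 0 := by
    simp only [ne_eq, ENNReal.ofReal_eq_zero, not_le]
    exact hδ0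
  have hδtop : ENNReal.ofReal δ ≠ ⊤ := ENNReal.ofReal_ne_top
  obtain ⟨N, hN⟩ := ENNReal.exists_nat_gt (ENNReal.div_lt_top hIlt.ne hδne).ne
  have hlt : I < (N : ENNReal) * ENNReal.ofReal δ := by
    have := (ENNReal.mul_lt_mul_iff_left hδne hδtop).2 hN
    rwa [ENNReal.div_mul_cancel hδne hδtop] at this
  have hge : ((N : ℕ) : ENNReal) * ENNReal.ofReal δ ≤ I := by
    refine le_trans ?_ (hmain N)
    gcongr
    exact_mod_cast Nat.le_succ N
  exact absurd hge (not_le.2 hlt)
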